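/- Let m be an odd positive integer and a ∈ ℂ. Consider the linear differential operator on the space P_m[t] of complex polynomials of degree at most m given by D := (−mt + t²(d/dt) − (d/dt))∘(m − 2t(d/dt)) + (1+2a)(mt − t²(d/dt) − (d/dt)), and set k₀ := (m−1−2a)/4. Then D has a nonzero kernel on P_m[t] if and only if k₀ ∈ ℕ and 2k₀ ≤ m−1; and in that case the kernel of D on P_m[t] is two-dimensional, spanned by the polynomials q₁(t) := ∑_{k=0}^{k₀} [(−m/2)_k (−k₀)_k / (k! (k₀+1−m/2)_k)] t^{2k} and q₂(t) := ∑_{k=0}^{k₀} [(−m/2)_k (−k₀)_k / (k! (k₀+1−m/2)_k)] t^{m−2k}. -/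

import Mathlib

noncomputable section

open Polynomial

/-- The second-order differential operator
`D = (-mt + t²(d/dt) - d/dt) ∘ (m - 2t(d/dt)) + (1+2a)(mt - t²(d/dt) - d/dt)`
acting on polynomials in `t`. -/
def Dop (m : ℕ) (a : ℂ) (q : ℂ[X]) : ℂ[X] :=
  (-(m : ℂ)) • (X * (((m : ℂ) • q) - 2 • (X * derivative q))) +
    X ^ 2 * derivative (((m : ℂ) • q) - 2 • (X * derivative q)) -
    derivative (((m : ℂ) • q) - 2 • (X * derivative q)) +
    (1 + 2 * a) • (((m : ℂ) • (X * q)) - X ^ 2 * derivative q - derivative q)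

/-- The coefficient `(-m/2)_k (-k₀)_k / (k! (k₀+1-m/2)_k)` (Pochhammer symbols). -/
def hgCoeff (m k₀ k : ℕ) : ℂ :=
  (ascPochhammer ℂ k).eval (-(m : ℂ) / 2) * (ascPochhammer ℂ k).eval (-(k₀ : ℂ)) /
    ((k.factorial : ℂ) * (ascPochhammer ℂ k).eval ((k₀ : ℂ) + 1 - (m : ℂ) / 2))

/-- `q₁(t) = ∑_{k=0}^{k₀} (-m/2)_k (-k₀)_k / (k! (k₀+1-m/2)_k) t^{2k}`. -/
def q₁ (m k₀ : ℕ) : ℂ[X] :=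
  ∑ k ∈ Finset.range (k₀ + 1), C (hgCoeff m k₀ k) * X ^ (2 * k)

/-- `q₂(t) = ∑_{k=0}^{k₀} (-m/2)_k (-k₀)_k / (k! (k₀+1-m/2)_k) t^{m-2k}`. -/
def q₂ (m k₀ : ℕ) : ℂ[X] :=
  ∑ k ∈ Finset.range (k₀ + 1), C (hgCoeff m k₀ k) * X ^ (m - 2 * k)

/-! ### Coefficient recurrences of `Dop` -/

def Acoef (m : ℕ) (a : ℂ) (n : ℕ) : ℂ := ((m:ℂ) - n) * (2*n - m + 1 + 2*a)
def Bcoef (m : ℕ) (a : ℂ) (n : ℕ) : ℂ := (n:ℂ) * (2*n - m - 1 - 2*a)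

lemma coeff_Dop_zero (m : ℕ) (a : ℂ) (q : ℂ[X]) :
    (Dop m a q).coeff 0 = Bcoef m a 1 * q.coeff 1 := by
  simp [Dop, Bcoef, coeff_derivative, mul_coeff_zero]
  ring

lemma coeff_Dop_succ (m : ℕ) (a : ℂ) (q : ℂ[X]) (n : ℕ) :
    (Dop m a q).coeff (n+1) =
      Acoef m a n * q.coeff n + Bcoef m a (n+2) * q.coeff (n+2) := by
  have hX2 : ∀ (p : ℂ[X]) (d : ℕ), (X^2 * p).coeff (d+2) = p.coeff d := fun p d => by
    simpa [add_comm] using Polynomial.coeff_X_pow_mul p 2 d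
  have hX21 : ∀ (p : ℂ[X]), (X^2 * p).coeff 1 = 0 := fun p => by
    rw [pow_two, mul_assoc, coeff_X_mul, mul_coeff_zero, coeff_X_zero, zero_mul]
  have hXd : ∀ (p : ℂ[X]) (d : ℕ), (X * derivative p).coeff d = d * p.coeff d := by
    intro p d
    match d with
    | 0 => simp [mul_coeff_zero]
    | Nat.succ e => rw [coeff_X_mul, coeff_derivative]; push_cast; ring
  match n with
  | 0 =>
    simp [Dop, Acoef, Bcoef, coeff_derivative, hXd, coeff_X_mul, hX21, hX2, mul_coeff_zero]
    ring
  | Nat.succ k =>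
    simp [Dop, Acoef, Bcoef, coeff_derivative, hXd, coeff_X_mul, hX2,
      show k+1+1 = k+2 from rfl]
    ring

lemma Dop_add (m : ℕ) (a : ℂ) (p q : ℂ[X]) : Dop m a (p + q) = Dop m a p + Dop m a q := by
  ext n
  match n with
  | 0 => simp only [coeff_Dop_zero, coeff_add]; ring
  | Nat.succ j => simp only [coeff_Dop_succ, coeff_add]; ring

lemma Dop_smul (m : ℕ) (a c : ℂ) (q : ℂ[X]) : Dop m a (c • q) = c • Dop m a q := by
  ext n
  match n with
  | 0 => simp only [coeff_Dop_zero, coeff_smul, smul_eq_mul]; ring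
  | Nat.succ j => simp only [coeff_Dop_succ, coeff_smul, smul_eq_mul]; ring

lemma Dop_sub (m : ℕ) (a : ℂ) (p q : ℂ[X]) : Dop m a (p - q) = Dop m a p - Dop m a q := by
  have h := Dop_add m a (p - q) q
  rw [sub_add_cancel] at h
  rw [h]; ring

/-! ### Hypergeometric coefficient facts -/

lemma asc_ne (m k₀ : ℕ) (hm : Odd m) (k : ℕ) :
    (ascPochhammer ℂ k).eval ((k₀ : ℂ) + 1 - (m : ℂ) / 2) ≠ 0 := by
  induction k with
  | zero => simp
  | succ n ih =>
    rw [ascPochhammer_succ_eval]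
    refine mul_ne_zero ih ?_
    intro h
    have : (m : ℂ) = ((2*(k₀+1+n) : ℕ) : ℂ) := by push_cast; linear_combination -2*h
    have h2 := Nat.cast_injective (R := ℂ) this
    obtain ⟨j, hj⟩ := hm
    omega

lemma yk_ne (m k₀ : ℕ) (hm : Odd m) (k : ℕ) : (k₀:ℂ) + 1 - (m:ℂ)/2 + k ≠ 0 := by
  intro h
  have : (m : ℂ) = ((2*(k₀+1+k) : ℕ) : ℂ) := by push_cast; linear_combination -2*h
  have h2 := Nat.cast_injective (R := ℂ) this
  obtain ⟨j, hj⟩ := hm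
  omega

lemma hg_zero (m k₀ : ℕ) : hgCoeff m k₀ 0 = 1 := by simp [hgCoeff]

lemma hg_rec (m k₀ : ℕ) (hm : Odd m) (k : ℕ) :
    ((k:ℂ)+1) * ((k₀:ℂ) + 1 - (m:ℂ)/2 + k) * hgCoeff m k₀ (k+1) =
      ((k:ℂ) - (m:ℂ)/2) * ((k:ℂ) - k₀) * hgCoeff m k₀ k := by
  have h1 := asc_ne m k₀ hm k
  have hy := yk_ne m k₀ hm k
  have h3 : ((k.factorial : ℕ) : ℂ) ≠ 0 := Nat.cast_ne_zero.mpr k.factorial_ne_zero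
  have hk1 : ((k:ℂ)+1) ≠ 0 := by
    intro h
    have : ((k+1 : ℕ) : ℂ) = ((0:ℕ):ℂ) := by push_cast; linear_combination h
    exact Nat.succ_ne_zero k (Nat.cast_injective (R := ℂ) this)
  have e1 : (ascPochhammer ℂ (k+1)).eval (-(m:ℂ)/2) =
      (ascPochhammer ℂ k).eval (-(m:ℂ)/2) * ((k:ℂ) - (m:ℂ)/2) := by
    rw [ascPochhammer_succ_eval]; ring
  have e2 : (ascPochhammer ℂ (k+1)).eval (-(k₀:ℂ)) =
      (ascPochhammer ℂ k).eval (-(k₀:ℂ)) * ((k:ℂ) - (k₀:ℂ)) := by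
    rw [ascPochhammer_succ_eval]; ring
  have e3 : (ascPochhammer ℂ (k+1)).eval ((k₀:ℂ) + 1 - (m:ℂ)/2) =
      (ascPochhammer ℂ k).eval ((k₀:ℂ) + 1 - (m:ℂ)/2) * ((k₀:ℂ) + 1 - (m:ℂ)/2 + k) := by
    rw [ascPochhammer_succ_eval]
  have f1 : (((k+1).factorial : ℕ) : ℂ) = ((k:ℂ)+1) * ((k.factorial : ℕ) : ℂ) := by
    rw [Nat.factorial_succ]; push_cast; ring
  rw [hgCoeff, hgCoeff, e1, e2, e3, f1]
  set P := (ascPochhammer ℂ k).eval (-(m:ℂ)/2)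
  set Q := (ascPochhammer ℂ k).eval (-(k₀:ℂ))
  set E := (ascPochhammer ℂ k).eval ((k₀:ℂ) + 1 - (m:ℂ)/2)
  set F := ((k.factorial : ℕ) : ℂ)
  set c := ((k:ℂ)+1)
  set Y := ((k₀:ℂ) + 1 - (m:ℂ)/2 + (k:ℂ))
  field_simp

/-! ### Coefficients of q₁ and q₂ -/

lemma q₁_coeff_at (m k₀ : ℕ) (k : ℕ) (hk : k ≤ k₀) :
    (q₁ m k₀).coeff (2*k) = hgCoeff m k₀ k := by
  rw [q₁, finset_sum_coeff]
  rw [Finset.sum_eq_single k]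
  · simp
  · intro b _ hb
    simp only [coeff_C_mul, coeff_X_pow]
    rw [if_neg (by omega), mul_zero]
  · intro h; exact absurd (Finset.mem_range.mpr (by omega)) h

lemma q₁_coeff_zero (m k₀ : ℕ) (n : ℕ) (h : ∀ k ≤ k₀, n ≠ 2*k) :
    (q₁ m k₀).coeff n = 0 := by
  rw [q₁, finset_sum_coeff]
  apply Finset.sum_eq_zero
  intro b hb
  simp only [coeff_C_mul, coeff_X_pow]
  rw [if_neg (h b (by simpa using Nat.lt_succ_iff.mp (Finset.mem_range.mp hb))), mul_zero]

lemma q₂_coeff_at (m k₀ : ℕ) (h2 : 2*k₀ + 1 ≤ m) (k : ℕ) (hk : k ≤ k₀) :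
    (q₂ m k₀).coeff (m - 2*k) = hgCoeff m k₀ k := by
  rw [q₂, finset_sum_coeff]
  rw [Finset.sum_eq_single k]
  · simp
  · intro b hb hbk
    have hb' : b ≤ k₀ := Nat.lt_succ_iff.mp (Finset.mem_range.mp hb)
    simp only [coeff_C_mul, coeff_X_pow]
    rw [if_neg (by omega), mul_zero]
  · intro h; exact absurd (Finset.mem_range.mpr (by omega)) h

lemma q₂_coeff_zero (m k₀ : ℕ) (n : ℕ) (h : ∀ k ≤ k₀, n ≠ m - 2*k) :
    (q₂ m k₀).coeff n = 0 := by
  rw [q₂, finset_sum_coeff]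
  apply Finset.sum_eq_zero
  intro b hb
  simp only [coeff_C_mul, coeff_X_pow]
  rw [if_neg (h b (Nat.lt_succ_iff.mp (Finset.mem_range.mp hb))), mul_zero]

lemma q₁_degree (m k₀ : ℕ) (h2 : 2*k₀ + 1 ≤ m) : (q₁ m k₀).degree ≤ (m : WithBot ℕ) := by
  apply (Polynomial.degree_sum_le _ _).trans
  apply Finset.sup_le
  intro k hk
  apply (Polynomial.degree_C_mul_X_pow_le _ _).trans
  have hk' : 2*k ≤ m := by have := Nat.lt_succ_iff.mp (Finset.mem_range.mp hk); omega
  exact_mod_cast Nat.cast_le.mpr hk'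

lemma q₂_degree (m k₀ : ℕ) : (q₂ m k₀).degree ≤ (m : WithBot ℕ) := by
  apply (Polynomial.degree_sum_le _ _).trans
  apply Finset.sup_le
  intro k hk
  apply (Polynomial.degree_C_mul_X_pow_le _ _).trans
  exact_mod_cast Nat.cast_le.mpr (Nat.sub_le m (2*k))

/-! ### Nonvanishing of the recurrence coefficients -/

lemma Bcoef_ne (m : ℕ) (a : ℂ) (hm : Odd m)
    (hnc : ¬ ∃ k₀ : ℕ, ((m : ℂ) - 1 - 2 * a) / 4 = (k₀ : ℂ) ∧ 2 * k₀ ≤ m - 1)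
    (n : ℕ) (hodd : Odd n) (hnm : n ≤ m) : Bcoef m a n ≠ 0 := by
  intro h0
  rcases mul_eq_zero.mp h0 with h | h
  · have : n = 0 := Nat.cast_injective (R := ℂ) (by exact_mod_cast h)
    rcases hodd with ⟨t, ht⟩
    omega
  · obtain ⟨i, hi⟩ := hm
    obtain ⟨i', hi'⟩ := hodd
    set j := (m - n)/2 with hj
    have hmn : 2*j = m - n := by omega
    refine hnc ⟨j, ?_, by omega⟩
    have hc : 2*(j:ℂ) = (m:ℂ) - n := by
      have := congrArg (Nat.cast : ℕ → ℂ) hmn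
      push_cast [Nat.cast_sub hnm] at this
      linear_combination this
    linear_combination h/4 - hc/2

lemma Acoef_even_ne (m : ℕ) (a : ℂ)
    (hnc : ¬ ∃ k₀ : ℕ, ((m : ℂ) - 1 - 2 * a) / 4 = (k₀ : ℂ) ∧ 2 * k₀ ≤ m - 1)
    (k : ℕ) (hk : 2*k ≤ m - 1) (hm0 : 0 < m) : Acoef m a (2*k) ≠ 0 := by
  intro h0
  rcases mul_eq_zero.mp h0 with h | h
  · push_cast at h
    have hc : (m:ℂ) = ((2*k : ℕ):ℂ) := by push_cast; linear_combination h
    have := Nat.cast_injective (R := ℂ) hc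
    omega
  · refine hnc ⟨k, ?_, hk⟩
    push_cast at h
    linear_combination -h/4

lemma Acoef_self (m : ℕ) (a : ℂ) : Acoef m a m = 0 := by
  simp [Acoef]

/-! ### Vanishing kernel when no k₀ exists -/

lemma ker_eq_zero (m : ℕ) (hm : Odd m) (hm0 : 0 < m) (a : ℂ)
    (hnc : ¬ ∃ k₀ : ℕ, ((m : ℂ) - 1 - 2 * a) / 4 = (k₀ : ℂ) ∧ 2 * k₀ ≤ m - 1)
    (q : ℂ[X]) (hdeg : q.degree ≤ (m : WithBot ℕ)) (hD : Dop m a q = 0) : q = 0 := by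
  have hcoeff : ∀ n, m < n → q.coeff n = 0 := fun n hn =>
    coeff_eq_zero_of_degree_lt (lt_of_le_of_lt hdeg (by exact_mod_cast Nat.cast_lt.mpr hn))
  have hrel0 : Bcoef m a 1 * q.coeff 1 = 0 := by
    rw [← coeff_Dop_zero, hD, coeff_zero]
  have hrel : ∀ n, Acoef m a n * q.coeff n + Bcoef m a (n+2) * q.coeff (n+2) = 0 := fun n => by
    rw [← coeff_Dop_succ, hD, coeff_zero]
  have hodd : ∀ k, q.coeff (2*k+1) = 0 := by
    intro k
    induction k with
    | zero =>
      have hB : Bcoef m a 1 ≠ 0 := Bcoef_ne m a hm hnc 1 odd_one hm0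
      simpa using (mul_eq_zero.mp hrel0).resolve_left hB
    | succ j ih =>
      by_cases h : 2*j+3 ≤ m
      · have hr := hrel (2*j+1)
        rw [ih, mul_zero, zero_add] at hr
        have hB : Bcoef m a (2*j+1+2) ≠ 0 := Bcoef_ne m a hm hnc _ ⟨j+1, by omega⟩ (by omega)
        have := (mul_eq_zero.mp hr).resolve_left hB
        simpa [show 2*(j+1)+1 = 2*j+1+2 by ring] using this
      · exact hcoeff _ (by omega)
  have heven : ∀ d n, n + 2*d + 1 = m → q.coeff n = 0 := by
    intro d
    induction d with
    | zero =>
      intro n hn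
      have hr := hrel n
      rw [hcoeff (n+2) (by omega), mul_zero, add_zero] at hr
      obtain ⟨i, hi⟩ := hm
      obtain ⟨k, hk⟩ : ∃ k, n = 2*k := ⟨n/2, by omega⟩
      have hA : Acoef m a n ≠ 0 := by
        rw [hk]; exact Acoef_even_ne m a hnc k (by omega) hm0
      exact (mul_eq_zero.mp hr).resolve_left hA
    | succ d ih =>
      intro n hn
      have hr := hrel n
      rw [ih (n+2) (by omega), mul_zero, add_zero] at hr
      obtain ⟨i, hi⟩ := hm
      obtain ⟨k, hk⟩ : ∃ k, n = 2*k := ⟨n/2, by omega⟩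
      have hA : Acoef m a n ≠ 0 := by
        rw [hk]; exact Acoef_even_ne m a hnc k (by omega) hm0
      exact (mul_eq_zero.mp hr).resolve_left hA
  ext n
  rw [coeff_zero]
  rcases le_or_gt n m with hn | hn
  · rcases Nat.even_or_odd n with ⟨k, hk⟩ | ⟨k, hk⟩
    · obtain ⟨i, hi⟩ := hm
      exact heven ((m - 1 - n)/2) n (by omega)
    · have : n = 2*k+1 := by omega
      rw [this]; exact hodd k
  · exact hcoeff n hn

/-! ### The case where k₀ exists -/

section Cond

variable (m k₀ : ℕ) (a : ℂ)

lemma hA0 (ha : a = ((m:ℂ) - 1 - 4*k₀)/2) : Acoef m a (2*k₀) = 0 := by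
  simp only [Acoef, ha]; push_cast; ring

lemma hB0 (ha : a = ((m:ℂ) - 1 - 4*k₀)/2) (h : 2*k₀ ≤ m) : Bcoef m a (m - 2*k₀) = 0 := by
  simp only [Bcoef, ha]; push_cast [Nat.cast_sub h]; ring

lemma keyA (hm : Odd m) (ha : a = ((m:ℂ) - 1 - 4*k₀)/2) (k : ℕ) :
    Acoef m a (2*k) * hgCoeff m k₀ k + Bcoef m a (2*k+2) * hgCoeff m k₀ (k+1) = 0 := by
  simp only [Acoef, Bcoef, ha]
  push_cast
  linear_combination (8:ℂ) * hg_rec m k₀ hm k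

lemma keyB (hm : Odd m) (ha : a = ((m:ℂ) - 1 - 4*k₀)/2) (k : ℕ) (hkm : 2*k+2 ≤ m) :
    Acoef m a (m - (2*k+2)) * hgCoeff m k₀ (k+1) + Bcoef m a (m - 2*k) * hgCoeff m k₀ k = 0 := by
  have hkm' : 2*k ≤ m := by omega
  simp only [Acoef, Bcoef, ha]
  push_cast [Nat.cast_sub hkm, Nat.cast_sub hkm']
  linear_combination (-8:ℂ) * hg_rec m k₀ hm k

lemma hBe (hm : Odd m) (ha : a = ((m:ℂ) - 1 - 4*k₀)/2) (k : ℕ) (hk : 1 ≤ k) :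
    Bcoef m a (2*k) ≠ 0 := by
  intro h0
  rcases mul_eq_zero.mp h0 with h | h
  · have : 2*k = 0 := Nat.cast_injective (R := ℂ) (by exact_mod_cast h)
    omega
  · rw [ha] at h
    push_cast at h
    have hc : (m:ℂ) = ((2*(k+k₀) : ℕ):ℂ) := by push_cast; linear_combination -h/2
    have := Nat.cast_injective (R := ℂ) hc
    obtain ⟨i, hi⟩ := id hm
    omega

lemma hAo (hm : Odd m) (ha : a = ((m:ℂ) - 1 - 4*k₀)/2) (n : ℕ) (hodd : Odd n) (hn : n < m) :
    Acoef m a n ≠ 0 := by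
  intro h0
  rcases mul_eq_zero.mp h0 with h | h
  · have : m = n := Nat.cast_injective (R := ℂ) (by exact_mod_cast sub_eq_zero.mp h)
    omega
  · rw [ha] at h
    push_cast at h
    have hc : ((n:ℕ):ℂ) = ((2*k₀ : ℕ):ℂ) := by push_cast; linear_combination h/2
    have := Nat.cast_injective (R := ℂ) hc
    obtain ⟨i, hi⟩ := id hodd
    omega

lemma Dop_q₁ (hm : Odd m) (ha : a = ((m:ℂ) - 1 - 4*k₀)/2) : Dop m a (q₁ m k₀) = 0 := by
  ext n
  rw [coeff_zero]
  match n with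
  | 0 =>
    rw [coeff_Dop_zero, q₁_coeff_zero m k₀ 1 (fun i _ => by omega), mul_zero]
  | Nat.succ j =>
    rw [coeff_Dop_succ]
    rcases Nat.even_or_odd j with ⟨k, hk⟩ | hjo
    · have hj : j = 2*k := by omega
      rw [hj]
      rcases lt_trichotomy k k₀ with h | h | h
      · have hc2 : (q₁ m k₀).coeff (2*k+2) = hgCoeff m k₀ (k+1) := by
          rw [show 2*k+2 = 2*(k+1) by ring]; exact q₁_coeff_at m k₀ (k+1) h
        rw [q₁_coeff_at m k₀ k (le_of_lt h), hc2]
        exact keyA m k₀ a hm ha k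
      · rw [h, q₁_coeff_at m k₀ k₀ le_rfl, q₁_coeff_zero m k₀ (2*k₀+2) (fun i hi => by omega),
          hA0 m k₀ a ha]
        ring
      · rw [q₁_coeff_zero m k₀ (2*k) (fun i hi => by omega),
          q₁_coeff_zero m k₀ (2*k+2) (fun i hi => by omega)]
        ring
    · obtain ⟨t, ht⟩ := id hjo
      rw [q₁_coeff_zero m k₀ j (fun i hi => by omega),
        q₁_coeff_zero m k₀ (j+2) (fun i hi => by omega)]
      ring

lemma Dop_q₂ (hm : Odd m) (hm0 : 0 < m) (ha : a = ((m:ℂ) - 1 - 4*k₀)/2) (h2 : 2*k₀+1 ≤ m) :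
    Dop m a (q₂ m k₀) = 0 := by
  ext n
  rw [coeff_zero]
  match n with
  | 0 =>
    rw [coeff_Dop_zero]
    by_cases htop : m = 2*k₀ + 1
    · have hB : Bcoef m a 1 = 0 := by
        simp only [Bcoef, ha, htop]; push_cast; ring
      rw [hB, zero_mul]
    · rw [q₂_coeff_zero m k₀ 1 (fun i hi => by omega), mul_zero]
  | Nat.succ j =>
    rw [coeff_Dop_succ]
    rcases Nat.even_or_odd j with ⟨t, ht⟩ | hjo
    · obtain ⟨i, hi⟩ := id hm
      rw [q₂_coeff_zero m k₀ j (fun i hi => by omega),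
        q₂_coeff_zero m k₀ (j+2) (fun i hi => by omega)]
      ring
    · obtain ⟨t, ht⟩ := id hjo
      obtain ⟨i, hi⟩ := id hm
      rcases lt_trichotomy j m with hlt | heq | hgt
      · set s := (m - j)/2 with hs
        have hsj : j = m - 2*s ∧ 2*s ≤ m ∧ 1 ≤ s := by omega
        rcases lt_trichotomy s (k₀+1) with hsk | hsk | hsk
        · obtain ⟨u, hu⟩ : ∃ u, s = u + 1 := ⟨s-1, by omega⟩
          have e1 : (q₂ m k₀).coeff j = hgCoeff m k₀ (u+1) := by
            rw [show j = m - 2*(u+1) by omega]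
            exact q₂_coeff_at m k₀ h2 (u+1) (by omega)
          have e2 : (q₂ m k₀).coeff (j+2) = hgCoeff m k₀ u := by
            rw [show j+2 = m - 2*u by omega]
            exact q₂_coeff_at m k₀ h2 u (by omega)
          have eA : Acoef m a j = Acoef m a (m - (2*u+2)) := by rw [show j = m - (2*u+2) by omega]
          have eB : Bcoef m a (j+2) = Bcoef m a (m - 2*u) := by rw [show j+2 = m - 2*u by omega]
          rw [e1, e2, eA, eB]
          exact keyB m k₀ a hm ha u (by omega)
        · have e1 : (q₂ m k₀).coeff j = 0 := q₂_coeff_zero m k₀ j (fun i hi => by omega)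
          have eB : Bcoef m a (j+2) = 0 := by
            rw [show j+2 = m - 2*k₀ by omega]
            exact hB0 m k₀ a ha (by omega)
          rw [e1, eB]
          ring
        · rw [q₂_coeff_zero m k₀ j (fun i hi => by omega),
            q₂_coeff_zero m k₀ (j+2) (fun i hi => by omega)]
          ring
      · rw [heq, Acoef_self, q₂_coeff_zero m k₀ (m+2) (fun i hi => by omega)]
        ring
      · rw [q₂_coeff_zero m k₀ j (fun i hi => by omega),
          q₂_coeff_zero m k₀ (j+2) (fun i hi => by omega)]
        ring

lemma q₁_coeff_zero' : (q₁ m k₀).coeff 0 = 1 := by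
  have := q₁_coeff_at m k₀ 0 (Nat.zero_le _)
  simpa [hg_zero] using this

lemma q₂_coeff_top (h2 : 2*k₀+1 ≤ m) : (q₂ m k₀).coeff m = 1 := by
  have := q₂_coeff_at m k₀ h2 0 (Nat.zero_le _)
  simpa [hg_zero] using this

lemma q₂_coeff_zero₀ (h2 : 2*k₀+1 ≤ m) : (q₂ m k₀).coeff 0 = 0 :=
  q₂_coeff_zero m k₀ 0 (fun i hi => by omega)

lemma q₁_coeff_top (hm : Odd m) : (q₁ m k₀).coeff m = 0 :=
  q₁_coeff_zero m k₀ m (fun i hi => by obtain ⟨t, ht⟩ := id hm; omega)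

lemma ker_sub_span (hm : Odd m) (hm0 : 0 < m)
    (ha : a = ((m:ℂ) - 1 - 4*k₀)/2) (h2 : 2*k₀+1 ≤ m)
    (q : ℂ[X]) (hdeg : q.degree ≤ (m : WithBot ℕ)) (hD : Dop m a q = 0) :
    q ∈ (Submodule.span ℂ ({q₁ m k₀, q₂ m k₀} : Set ℂ[X])) := by
  set α := q.coeff 0 with hα
  set β := q.coeff m with hβ
  set r := q - α • q₁ m k₀ - β • q₂ m k₀ with hr
  have hDr : Dop m a r = 0 := by
    rw [hr, Dop_sub, Dop_sub, Dop_smul, Dop_smul, Dop_q₁ m k₀ a hm ha,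
      Dop_q₂ m k₀ a hm hm0 ha h2, hD]
    simp
  have hrel : ∀ n, Acoef m a n * r.coeff n + Bcoef m a (n+2) * r.coeff (n+2) = 0 := fun n => by
    rw [← coeff_Dop_succ, hDr, coeff_zero]
  have hr0 : r.coeff 0 = 0 := by
    simp only [hr, coeff_sub, coeff_smul, smul_eq_mul, q₁_coeff_zero' m k₀,
      q₂_coeff_zero₀ m k₀ h2, mul_one, mul_zero]
    rw [← hα]; ring
  have hrm : r.coeff m = 0 := by
    simp only [hr, coeff_sub, coeff_smul, smul_eq_mul, q₁_coeff_top m k₀ hm,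
      q₂_coeff_top m k₀ h2, mul_one, mul_zero]
    rw [← hβ]; ring
  have heven : ∀ k, r.coeff (2*k) = 0 := by
    intro k
    induction k with
    | zero => simpa using hr0
    | succ i ih =>
      have h := hrel (2*i)
      rw [ih, mul_zero, zero_add] at h
      have hB : Bcoef m a (2*i+2) ≠ 0 := by
        rw [show 2*i+2 = 2*(i+1) by ring]
        exact hBe m k₀ a hm ha (i+1) (by omega)
      have := (mul_eq_zero.mp h).resolve_left hB
      rwa [show 2*(i+1) = 2*i+2 by ring]
  have hodd : ∀ d n, n + 2*d = m → r.coeff n = 0 := by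
    intro d
    induction d with
    | zero => intro n hn; rw [show n = m by omega]; exact hrm
    | succ d ih =>
      intro n hn
      have h := hrel n
      rw [ih (n+2) (by omega), mul_zero, add_zero] at h
      obtain ⟨i, hi⟩ := id hm
      have hA : Acoef m a n ≠ 0 :=
        hAo m k₀ a ⟨i, hi⟩ ha n ⟨(n-1)/2, by omega⟩ (by omega)
      exact (mul_eq_zero.mp h).resolve_left hA
  have hrdeg : r.degree ≤ (m : WithBot ℕ) := by
    rw [hr]
    refine le_trans (degree_sub_le _ _) (max_le (le_trans (degree_sub_le _ _) (max_le hdeg ?_)) ?_)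
    · exact (degree_smul_le _ _).trans (q₁_degree m k₀ h2)
    · exact (degree_smul_le _ _).trans (q₂_degree m k₀)
  have hrz : r = 0 := by
    ext n
    rw [coeff_zero]
    rcases le_or_gt n m with hn | hn
    · rcases Nat.even_or_odd n with ⟨k, hk⟩ | ⟨k, hk⟩
      · rw [show n = 2*k by omega]; exact heven k
      · obtain ⟨i, hi⟩ := id hm
        exact hodd ((m - n)/2) n (by omega)
    · exact coeff_eq_zero_of_degree_lt (lt_of_le_of_lt hrdeg (by exact_mod_cast Nat.cast_lt.mpr hn))
  have hq : q = α • q₁ m k₀ + β • q₂ m k₀ := by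
    rw [hr, sub_sub, sub_eq_zero] at hrz
    exact hrz
  exact Submodule.mem_span_pair.mpr ⟨α, β, hq.symm⟩

end Cond

/-- Let `m` be an odd positive integer, `a ∈ ℂ`, and
`k₀ = (m-1-2a)/4`. The operator `D` has a nonzero kernel on the space of polynomials
of degree at most `m` if and only if `k₀ ∈ ℕ` and `2k₀ ≤ m-1`; in that case the
kernel is two-dimensional, spanned by the polynomials `q₁` and `q₂`. -/
theorem statement18 (m : ℕ) (hm : Odd m) (hm0 : 0 < m) (a : ℂ) :
    ((∃ q : ℂ[X], q.degree ≤ (m : WithBot ℕ) ∧ q ≠ 0 ∧ Dop m a q = 0) ↔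
      ∃ k₀ : ℕ, ((m : ℂ) - 1 - 2 * a) / 4 = (k₀ : ℂ) ∧ 2 * k₀ ≤ m - 1) ∧
    (∀ k₀ : ℕ, ((m : ℂ) - 1 - 2 * a) / 4 = (k₀ : ℂ) → 2 * k₀ ≤ m - 1 →
      {q : ℂ[X] | q.degree ≤ (m : WithBot ℕ) ∧ Dop m a q = 0} =
        (Submodule.span ℂ {q₁ m k₀, q₂ m k₀} : Set ℂ[X]) ∧
      LinearIndependent ℂ ![q₁ m k₀, q₂ m k₀]) := by
  constructor
  · constructor
    · rintro ⟨q, hdeg, hne, hD⟩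
      by_contra hnc
      exact hne (ker_eq_zero m hm hm0 a hnc q hdeg hD)
    · rintro ⟨k₀, h1, h2⟩
      have h2' : 2*k₀ + 1 ≤ m := by omega
      have ha : a = ((m:ℂ) - 1 - 4*k₀)/2 := by linear_combination -2*h1
      refine ⟨q₁ m k₀, q₁_degree m k₀ h2', ?_, Dop_q₁ m k₀ a hm ha⟩
      intro h0
      have hc := q₁_coeff_zero' m k₀
      rw [h0, coeff_zero] at hc
      exact zero_ne_one hc
  · intro k₀ h1 h2
    have h2' : 2*k₀ + 1 ≤ m := by omega
    have ha : a = ((m:ℂ) - 1 - 4*k₀)/2 := by linear_combination -2*h1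
    constructor
    · ext q
      simp only [Set.mem_setOf_eq, SetLike.mem_coe]
      constructor
      · rintro ⟨hdeg, hD⟩
        exact ker_sub_span m k₀ a hm hm0 ha h2' q hdeg hD
      · intro hq
        obtain ⟨α, β, rfl⟩ := Submodule.mem_span_pair.mp hq
        refine ⟨?_, ?_⟩
        · refine le_trans (degree_add_le _ _) (max_le ?_ ?_)
          · exact (degree_smul_le _ _).trans (q₁_degree m k₀ h2')
          · exact (degree_smul_le _ _).trans (q₂_degree m k₀)
        · rw [Dop_add, Dop_smul, Dop_smul, Dop_q₁ m k₀ a hm ha,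
            Dop_q₂ m k₀ a hm hm0 ha h2']
          simp
    · rw [linearIndependent_fin2]
      constructor
      · simp only [Matrix.cons_val_one, Matrix.head_cons, Matrix.cons_val_zero]
        intro h0
        have hc := q₂_coeff_top m k₀ h2'
        rw [h0, coeff_zero] at hc
        exact zero_ne_one hc
      · intro c
        simp only [Matrix.cons_val_one, Matrix.head_cons, Matrix.cons_val_zero]
        intro h0
        have hc := congrArg (fun p => p.coeff 0) h0
        simp only [coeff_smul, smul_eq_mul, q₂_coeff_zero₀ m k₀ h2', mul_zero,
          q₁_coeff_zero' m k₀] at hc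
        exact zero_ne_one hc
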